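/- arXiv:0712.1171 — 4 statements merged into one kernel-verified Lean document; each statement's English description precedes it below -/
import Mathlib

section
/- Let γ be a specification on a finite-spin product space Ω, μ ∈ 𝒢(γ), and suppose μ = α ν + (1-α) ν̄ with α ∈ (0,1). Then ν ∈ 𝒢(γ) if and only if the Radon–Nikodym density f = dν/dμ is measurable with respect to the tail σ-algebra ℱ_∞ (up to μ-modification). -/
open MeasureTheory
open scoped ENNReal

/-- A specification: a family `γ = (γ_Λ)_{Λ finite}` of proper probability
kernels from `(Ω, ℱ_{Λᶜ})` to `(Ω, ℱ)` satisfying the consistency condition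
`γ_Λ γ_{Λ'} = γ_Λ` for `Λ' ⊆ Λ`. -/
structure Specification (E S : Type*) [MeasurableSpace E] where
  ker : Finset S → (S → E) → Measure (S → E)
  isProb : ∀ (Λ : Finset S) (ω : S → E), IsProbabilityMeasure (ker Λ ω)
  meas : ∀ (Λ : Finset S) (A : Set (S → E)), MeasurableSet A →
    Measurable[MeasureTheory.cylinderEvents ((↑Λ : Set S)ᶜ)] (fun ω => ker Λ ω A)
  proper : ∀ (Λ : Finset S) (ω : S → E) (B : Set (S → E)),
    MeasurableSet[MeasureTheory.cylinderEvents ((↑Λ : Set S)ᶜ)] B →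
      ker Λ ω B = B.indicator (fun _ => (1 : ℝ≥0∞)) ω
  consistent : ∀ (Λ' Λ : Finset S), Λ' ⊆ Λ → ∀ (ω : S → E) (A : Set (S → E)),
    MeasurableSet A → ∫⁻ ω', ker Λ' ω' A ∂(ker Λ ω) = ker Λ ω A

/-- `μ ∈ 𝒢(γ)`: the probability measure `μ` is consistent with (specified by)
the specification `γ`, i.e. `μ γ_Λ = μ` for all finite `Λ`. -/
def IsGibbsFor {E S : Type*} [MeasurableSpace E] (γ : Specification E S)
    (μ : Measure (S → E)) : Prop :=
  IsProbabilityMeasure μ ∧ ∀ (Λ : Finset S) (A : Set (S → E)), MeasurableSet A →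
    ∫⁻ ω, γ.ker Λ ω A ∂μ = μ A

/-- The tail σ-algebra `ℱ_∞ = ⋂_{Λ finite} ℱ_{Λᶜ}`. -/
def tailSigma (E S : Type*) [MeasurableSpace E] : MeasurableSpace (S → E) :=
  ⨅ Λ : Finset S, MeasureTheory.cylinderEvents ((↑Λ : Set S)ᶜ)

section Aux

variable {E S : Type*} [MeasurableSpace E] (γ : Specification E S)

/-- A `ℱ_{Λᶜ}`-measurable function is `γ_Λ(ω, ·)`-a.e. equal to its value at `ω`. -/
lemma Specification.ker_ae_eq (Λ : Finset S) (ω : S → E) {k : (S → E) → ℝ≥0∞}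
    (hk : Measurable[cylinderEvents ((↑Λ : Set S)ᶜ)] k) :
    ∀ᵐ η ∂γ.ker Λ ω, k η = k ω := by
  haveI := γ.isProb Λ ω
  have hB1 : MeasurableSet[cylinderEvents ((↑Λ : Set S)ᶜ)] (k ⁻¹' Set.Iic (k ω)) :=
    hk measurableSet_Iic
  have hB2 : MeasurableSet[cylinderEvents ((↑Λ : Set S)ᶜ)] (k ⁻¹' Set.Ici (k ω)) :=
    hk measurableSet_Ici
  have e1 : γ.ker Λ ω (k ⁻¹' Set.Iic (k ω)) = 1 := by
    rw [γ.proper Λ ω _ hB1]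
    simp [Set.indicator_apply]
  have e2 : γ.ker Λ ω (k ⁻¹' Set.Ici (k ω)) = 1 := by
    rw [γ.proper Λ ω _ hB2]
    simp [Set.indicator_apply]
  have n1 : γ.ker Λ ω (k ⁻¹' Set.Iic (k ω))ᶜ = 0 := by
    rw [prob_compl_eq_zero_iff (cylinderEvents_le_pi _ hB1)]; exact e1
  have n2 : γ.ker Λ ω (k ⁻¹' Set.Ici (k ω))ᶜ = 0 := by
    rw [prob_compl_eq_zero_iff (cylinderEvents_le_pi _ hB2)]; exact e2
  have hsub : {η | ¬ k η = k ω} ⊆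
      (k ⁻¹' Set.Iic (k ω))ᶜ ∪ (k ⁻¹' Set.Ici (k ω))ᶜ := by
    intro η hη
    simp only [Set.mem_union, Set.mem_compl_iff, Set.mem_preimage, Set.mem_Iic, Set.mem_Ici]
    by_contra hcon
    push_neg at hcon
    exact hη (le_antisymm hcon.1 hcon.2)
  exact ae_iff.2 (measure_mono_null hsub (measure_union_null n1 n2))

/-- Properness, integral form: a `ℱ_{Λᶜ}`-measurable factor comes out of `∫ ⬝ dγ_Λ(ω)`. -/
lemma Specification.lintegral_ker_mul (Λ : Finset S) (ω : S → E) {k m : (S → E) → ℝ≥0∞}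
    (hk : Measurable[cylinderEvents ((↑Λ : Set S)ᶜ)] k) (hm : Measurable m) :
    ∫⁻ η, k η * m η ∂γ.ker Λ ω = k ω * ∫⁻ η, m η ∂γ.ker Λ ω := by
  have h := γ.ker_ae_eq Λ ω hk
  calc ∫⁻ η, k η * m η ∂γ.ker Λ ω = ∫⁻ η, k ω * m η ∂γ.ker Λ ω :=
        lintegral_congr_ae (h.mono fun η hη => by simp only [hη])
    _ = k ω * ∫⁻ η, m η ∂γ.ker Λ ω := lintegral_const_mul _ hm

/-- `ω ↦ ∫ k dγ_Λ(ω)` is `ℱ_{Λᶜ}`-measurable for measurable `k`. -/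
lemma Specification.meas_lintegral_ker (Λ : Finset S) {k : (S → E) → ℝ≥0∞}
    (hk : Measurable k) :
    Measurable[cylinderEvents ((↑Λ : Set S)ᶜ)] (fun ω => ∫⁻ η, k η ∂γ.ker Λ ω) := by
  refine Measurable.ennreal_induction
    (motive := fun k => Measurable[cylinderEvents ((↑Λ : Set S)ᶜ)]
      (fun ω => ∫⁻ η, k η ∂γ.ker Λ ω)) ?_ ?_ ?_ hk
  · intro c s hs
    have : ∀ ω, ∫⁻ η, s.indicator (fun _ => c) η ∂γ.ker Λ ω = c * γ.ker Λ ω s := fun ω => by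
      rw [lintegral_indicator hs, setLIntegral_const]
    simp only [this]
    exact (γ.meas Λ s hs).const_mul c
  · intro p q _ hp hq ihp ihq
    simp only [Pi.add_apply, lintegral_add_left hp]
    exact ihp.add ihq
  · intro fs hfs hmono ih
    simp only [lintegral_iSup hfs hmono]
    exact Measurable.iSup ih

/-- The invariance `μγ_Λ = μ` extends from sets to nonnegative functions. -/
lemma Specification.lintegral_gibbs {μ : Measure (S → E)} (hμ : IsGibbsFor γ μ)
    (Λ : Finset S) {k : (S → E) → ℝ≥0∞} (hk : Measurable k) :
    ∫⁻ ω, (∫⁻ η, k η ∂γ.ker Λ ω) ∂μ = ∫⁻ x, k x ∂μ := by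
  refine Measurable.ennreal_induction
    (motive := fun k => ∫⁻ ω, (∫⁻ η, k η ∂γ.ker Λ ω) ∂μ = ∫⁻ x, k x ∂μ) ?_ ?_ ?_ hk
  · intro c s hs
    have h1 : ∀ ω, ∫⁻ η, s.indicator (fun _ => c) η ∂γ.ker Λ ω = c * γ.ker Λ ω s := fun ω => by
      rw [lintegral_indicator hs, setLIntegral_const]
    simp only [h1]
    rw [lintegral_const_mul _ ((γ.meas Λ s hs).mono cylinderEvents_le_pi le_rfl),
      hμ.2 Λ s hs, lintegral_indicator hs, setLIntegral_const]
  · intro p q _ hp hq ihp ihq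
    calc ∫⁻ ω, (∫⁻ η, (p + q) η ∂γ.ker Λ ω) ∂μ
        = ∫⁻ ω, ((∫⁻ η, p η ∂γ.ker Λ ω) + ∫⁻ η, q η ∂γ.ker Λ ω) ∂μ := by
          refine lintegral_congr fun ω => ?_
          simp only [Pi.add_apply]
          exact lintegral_add_left hp _
      _ = (∫⁻ ω, (∫⁻ η, p η ∂γ.ker Λ ω) ∂μ) + ∫⁻ ω, (∫⁻ η, q η ∂γ.ker Λ ω) ∂μ :=
          lintegral_add_left ((γ.meas_lintegral_ker Λ hp).mono cylinderEvents_le_pi le_rfl) _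
      _ = (∫⁻ x, p x ∂μ) + ∫⁻ x, q x ∂μ := by rw [ihp, ihq]
      _ = ∫⁻ x, (p + q) x ∂μ := by
          rw [show ∫⁻ x, (p + q) x ∂μ = ∫⁻ x, p x + q x ∂μ from lintegral_congr fun x => rfl,
            lintegral_add_left hp]
  · intro fs hfs hmono ih
    simp only [lintegral_iSup hfs hmono]
    rw [lintegral_iSup
      (fun n => (γ.meas_lintegral_ker Λ (hfs n)).mono cylinderEvents_le_pi le_rfl)
      (fun i j hij ω => lintegral_mono (hmono hij))]
    exact iSup_congr ih

end Aux

/-- Let `μ ∈ 𝒢(γ)` and `μ = αν + (1-α)ν'` with `α ∈ (0,1)`. Then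
`ν ∈ 𝒢(γ)` iff the Radon–Nikodym density `dν/dμ` is, up to a
`μ`-modification, measurable with respect to the tail σ-algebra `ℱ_∞`. -/
theorem consistent_iff_density_tail_measurable
    {E S : Type*} [Fintype E] [MeasurableSpace E] [Countable S]
    (γ : Specification E S) (μ ν ν' : MeasureTheory.Measure (S → E))
    [MeasureTheory.IsProbabilityMeasure ν] [MeasureTheory.IsProbabilityMeasure ν']
    (hμ : IsGibbsFor γ μ) (α : ℝ≥0∞) (h0 : 0 < α) (h1 : α < 1)
    (hconv : μ = α • ν + (1 - α) • ν') :
    IsGibbsFor γ ν ↔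
      ∃ g : (S → E) → ℝ≥0∞, Measurable[tailSigma E S] g ∧ ν.rnDeriv μ =ᵐ[μ] g := by
  classical
  haveI hμP : IsProbabilityMeasure μ := hμ.1
  have hν_ac : ν ≪ μ := by
    refine Measure.AbsolutelyContinuous.mk fun s hs h0s => ?_
    have hle : (α • ν) s ≤ μ s := by
      rw [hconv, Measure.add_apply]; exact le_self_add
    rw [h0s, le_zero_iff, Measure.smul_apply, smul_eq_mul, mul_eq_zero] at hle
    exact hle.resolve_left h0.ne'
  set f := ν.rnDeriv μ with hf_def
  have hf_meas : Measurable f := Measure.measurable_rnDeriv ν μ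
  have hν_eq : μ.withDensity f = ν := Measure.withDensity_rnDeriv_eq ν μ hν_ac
  constructor
  · rintro ⟨hνP, hνG⟩
    -- the candidate local densities
    set h : Finset S → (S → E) → ℝ≥0∞ := fun Λ ω => ∫⁻ η, f η ∂γ.ker Λ ω with hh
    have hhmeas : ∀ Λ : Finset S, Measurable[cylinderEvents ((↑Λ : Set S)ᶜ)] (h Λ) :=
      fun Λ => γ.meas_lintegral_ker Λ hf_meas
    have key : ∀ Λ : Finset S, f =ᵐ[μ] h Λ := by
      intro Λ
      refine ae_eq_of_forall_setLIntegral_eq_of_sigmaFinite hf_meas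
        ((hhmeas Λ).mono cylinderEvents_le_pi le_rfl) fun A hA _ => ?_
      have hγA : Measurable (fun ω => γ.ker Λ ω A) :=
        (γ.meas Λ A hA).mono cylinderEvents_le_pi le_rfl
      -- ∫_A f dμ = ν A
      have e1 : ∫⁻ x in A, f x ∂μ = ν A := by
        rw [← hν_eq, withDensity_apply _ hA]
      -- ν A = ∫ f(ω) γ_Λ(ω, A) dμ(ω)   (ν is Gibbs)
      have e2 : ν A = ∫⁻ ω, f ω * γ.ker Λ ω A ∂μ := by
        rw [← hνG Λ A hA, ← hν_eq,
          lintegral_withDensity_eq_lintegral_mul μ hf_meas hγA]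
        rfl
      -- conditional-expectation step
      have ce : ∀ {m : (S → E) → ℝ≥0∞}, Measurable[cylinderEvents ((↑Λ : Set S)ᶜ)] m →
          ∫⁻ ω, f ω * m ω ∂μ = ∫⁻ ω, h Λ ω * m ω ∂μ := by
        intro m hm
        have hm' : Measurable m := hm.mono cylinderEvents_le_pi le_rfl
        calc ∫⁻ ω, f ω * m ω ∂μ
            = ∫⁻ ω, (∫⁻ η, f η * m η ∂γ.ker Λ ω) ∂μ :=
              (γ.lintegral_gibbs hμ Λ (hf_meas.mul hm')).symm
          _ = ∫⁻ ω, (∫⁻ η, m η * f η ∂γ.ker Λ ω) ∂μ := by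
              simp only [mul_comm]
          _ = ∫⁻ ω, m ω * h Λ ω ∂μ :=
              lintegral_congr fun ω => γ.lintegral_ker_mul Λ ω hm hf_meas
          _ = ∫⁻ ω, h Λ ω * m ω ∂μ := by simp only [mul_comm]
      have e3 : ∫⁻ ω, f ω * γ.ker Λ ω A ∂μ = ∫⁻ ω, h Λ ω * γ.ker Λ ω A ∂μ :=
        ce (γ.meas Λ A hA)
      -- ∫ h_Λ(ω) γ_Λ(ω, A) dμ(ω) = ∫_A h_Λ dμ   (μ is Gibbs + properness)
      have e4 : ∫⁻ ω, h Λ ω * γ.ker Λ ω A ∂μ = ∫⁻ x in A, h Λ x ∂μ := by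
        have hind : Measurable (A.indicator (1 : (S → E) → ℝ≥0∞)) :=
          measurable_const.indicator hA
        have step : ∀ ω, h Λ ω * γ.ker Λ ω A =
            ∫⁻ η, h Λ η * A.indicator 1 η ∂γ.ker Λ ω := fun ω => by
          rw [γ.lintegral_ker_mul Λ ω (hhmeas Λ) hind, lintegral_indicator_one hA]
        calc ∫⁻ ω, h Λ ω * γ.ker Λ ω A ∂μ
            = ∫⁻ ω, (∫⁻ η, h Λ η * A.indicator 1 η ∂γ.ker Λ ω) ∂μ :=
              lintegral_congr step
          _ = ∫⁻ η, h Λ η * A.indicator 1 η ∂μ :=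
              γ.lintegral_gibbs hμ Λ
                (((hhmeas Λ).mono cylinderEvents_le_pi le_rfl).mul hind)
          _ = ∫⁻ x in A, h Λ x ∂μ := by
              rw [← lintegral_indicator hA]
              refine lintegral_congr fun η => ?_
              by_cases hη : η ∈ A <;> simp [Set.indicator_of_mem, Set.indicator_of_notMem, hη]
      rw [e1, e2, e3, e4]
    -- build a tail-measurable version out of the local densities
    obtain ⟨u, hu⟩ := exists_surjective_nat (Finset S)
    set Λseq : ℕ → Finset S := fun n => (Finset.range (n + 1)).sup u with hΛseq
    have hmono : Monotone Λseq := fun a b hab =>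
      Finset.sup_mono (Finset.range_subset_range.2 (Nat.succ_le_succ hab))
    have hcof : ∀ Λ : Finset S, ∃ n, Λ ⊆ Λseq n := by
      intro Λ
      obtain ⟨n, rfl⟩ := hu Λ
      exact ⟨n, Finset.le_sup (Finset.mem_range.2 (Nat.lt_succ_self n))⟩
    set a : ℕ → (S → E) → ℝ≥0∞ := fun n ω => ⨆ m, h (Λseq (m + n)) ω with ha
    set g : (S → E) → ℝ≥0∞ := fun ω => ⨅ n, a n ω with hg
    have hanti : ∀ ω, Antitone (fun n => a n ω) := by
      intro ω x y hxy
      refine iSup_le fun m => ?_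
      refine le_iSup_of_le (m + (y - x)) (le_of_eq ?_)
      congr 2
      omega
    have hg_meas_cyl : ∀ Λ : Finset S, Measurable[cylinderEvents ((↑Λ : Set S)ᶜ)] g := by
      intro Λ
      obtain ⟨k, hk⟩ := hcof Λ
      have hshift : g = fun ω => ⨅ n, a (n + k) ω := by
        funext ω
        refine le_antisymm (le_iInf fun n => iInf_le _ (n + k))
          (le_iInf fun j => iInf_le_of_le j (hanti ω (Nat.le_add_right j k)))
      rw [hshift]
      refine Measurable.iInf fun n => Measurable.iSup fun m => ?_
      have hsub : (↑Λ : Set S) ⊆ ↑(Λseq (m + (n + k))) := by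
        refine Finset.coe_subset.2 (hk.trans (hmono ?_))
        omega
      exact (hhmeas (Λseq (m + (n + k)))).mono
        (cylinderEvents_mono (Set.compl_subset_compl.2 hsub)) le_rfl
    have hg_tail : Measurable[tailSigma E S] g := by
      intro t ht
      exact MeasurableSpace.measurableSet_iInf.2 fun Λ => hg_meas_cyl Λ ht
    have hae : f =ᵐ[μ] g := by
      have hall : ∀ᵐ ω ∂μ, ∀ n, f ω = h (Λseq n) ω := ae_all_iff.2 fun n => key (Λseq n)
      filter_upwards [hall] with ω hω
      have h1 : ∀ n, a n ω = f ω := by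
        intro n
        have : (fun m => h (Λseq (m + n)) ω) = fun _ => f ω :=
          funext fun m => (hω (m + n)).symm
        rw [ha]
        simp only [this, iSup_const]
      simp only [hg, h1, iInf_const]
    exact ⟨g, hg_tail, hae⟩
  · rintro ⟨g, hg_tail, hg_ae⟩
    refine ⟨inferInstance, fun Λ A hA => ?_⟩
    have hg_cyl : ∀ Λ : Finset S, Measurable[cylinderEvents ((↑Λ : Set S)ᶜ)] g :=
      fun Λ => hg_tail.mono (iInf_le _ Λ) le_rfl
    have hg_meas : Measurable g := (hg_cyl ∅).mono cylinderEvents_le_pi le_rfl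
    have hγA : Measurable (fun ω => γ.ker Λ ω A) :=
      (γ.meas Λ A hA).mono cylinderEvents_le_pi le_rfl
    have hν_g : ν = μ.withDensity g := by
      rw [← hν_eq]
      exact withDensity_congr_ae hg_ae
    have hind : Measurable (A.indicator (1 : (S → E) → ℝ≥0∞)) :=
      measurable_const.indicator hA
    calc ∫⁻ ω, γ.ker Λ ω A ∂ν = ∫⁻ ω, g ω * γ.ker Λ ω A ∂μ := by
          rw [hν_g, lintegral_withDensity_eq_lintegral_mul μ hg_meas hγA]; rfl
      _ = ∫⁻ ω, (∫⁻ η, g η * A.indicator 1 η ∂γ.ker Λ ω) ∂μ := by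
          refine lintegral_congr fun ω => ?_
          rw [γ.lintegral_ker_mul Λ ω (hg_cyl Λ) hind, lintegral_indicator_one hA]
      _ = ∫⁻ η, g η * A.indicator 1 η ∂μ :=
          γ.lintegral_gibbs hμ Λ (hg_meas.mul hind)
      _ = ∫⁻ x in A, g x ∂μ := by
          rw [← lintegral_indicator hA]
          refine lintegral_congr fun η => ?_
          by_cases hη : η ∈ A <;> simp [Set.indicator_of_mem, Set.indicator_of_notMem, hη]
      _ = ν A := by rw [hν_g, withDensity_apply _ hA]
end

section
/- Distinct extreme points μ, ν of 𝒢(γ) are mutually singular: there exists a tail event B ∈ ℱ_∞ with μ(B) = 1 and ν(B) = 0. More generally, each μ ∈ 𝒢(γ) is uniquely determined within 𝒢(γ) by its restriction to ℱ_∞. -/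
open MeasureTheory
open scoped ENNReal

/-- `μ ∈ 𝒢(γ)` is an extreme point of `𝒢(γ)`. -/
def IsExtremeGibbs {E S : Type*} [MeasurableSpace E] (γ : Specification E S)
    (μ : MeasureTheory.Measure (S → E)) : Prop :=
  IsGibbsFor γ μ ∧ ∀ (ν ν' : MeasureTheory.Measure (S → E)) (α : ℝ≥0∞),
    IsGibbsFor γ ν → IsGibbsFor γ ν' → 0 < α → α < 1 →
      μ = α • ν + (1 - α) • ν' → ν = μ ∧ ν' = μ

section Helpers

variable {E S : Type*} [MeasurableSpace E] (γ : Specification E S)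

lemma tail_le_pi : tailSigma E S ≤ (MeasurableSpace.pi : MeasurableSpace (S → E)) :=
  le_trans (iInf_le _ ∅) cylinderEvents_le_pi

lemma tail_le_cyl (Λ : Finset S) :
    tailSigma E S ≤ MeasureTheory.cylinderEvents ((↑Λ : Set S)ᶜ) := iInf_le _ Λ

/-- Properness, set-integral form. -/
lemma setLIntegral_proper (Λ : Finset S) (ω : S → E) {B : Set (S → E)}
    (hB : MeasurableSet[MeasureTheory.cylinderEvents ((↑Λ : Set S)ᶜ)] B)
    (f : (S → E) → ℝ≥0∞) :
    ∫⁻ ω' in B, f ω' ∂(γ.ker Λ ω) = B.indicator (fun _ => ∫⁻ ω', f ω' ∂(γ.ker Λ ω)) ω := by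
  by_cases hω : ω ∈ B
  · have h0 : γ.ker Λ ω Bᶜ = 0 := by
      rw [γ.proper Λ ω Bᶜ hB.compl]
      simp [hω]
    rw [Measure.restrict_eq_self_of_ae_mem, Set.indicator_of_mem hω]
    rw [MeasureTheory.ae_iff]
    exact h0
  · have h0 : γ.ker Λ ω B = 0 := by
      rw [γ.proper Λ ω B hB]
      simp [hω]
    rw [Measure.restrict_eq_zero.mpr h0, Set.indicator_of_notMem hω]
    simp

/-- Properness, multiplicative form: a `ℱ_{Λᶜ}`-measurable factor pulls out of
integrals against `γ.ker Λ ω`. -/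
lemma lintegral_mul_proper (Λ : Finset S) {g f : (S → E) → ℝ≥0∞}
    (hg : Measurable[MeasureTheory.cylinderEvents ((↑Λ : Set S)ᶜ)] g)
    (hf : Measurable f) (ω : S → E) :
    ∫⁻ ω', g ω' * f ω' ∂(γ.ker Λ ω) = g ω * ∫⁻ ω', f ω' ∂(γ.ker Λ ω) := by
  revert ω
  refine @Measurable.ennreal_induction (S → E) (MeasureTheory.cylinderEvents ((↑Λ : Set S)ᶜ))
    (fun g => ∀ ω, ∫⁻ ω', g ω' * f ω' ∂(γ.ker Λ ω) = g ω * ∫⁻ ω', f ω' ∂(γ.ker Λ ω))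
    ?_ ?_ ?_ g hg
  · intro c s hs ω
    have hs' : MeasurableSet s := cylinderEvents_le_pi _ hs
    have h1 : ∀ ω', s.indicator (fun _ => c) ω' * f ω' = s.indicator (fun x => c * f x) ω' := by
      intro ω'
      by_cases h : ω' ∈ s <;> simp [h]
    simp_rw [h1]
    rw [lintegral_indicator hs', lintegral_const_mul c hf, setLIntegral_proper γ Λ ω hs]
    by_cases h : ω ∈ s <;> simp [h, mul_assoc]
  · intro g₁ g₂ _ hg₁ hg₂ ih₁ ih₂ ω
    have hg₁' : Measurable g₁ := hg₁.mono cylinderEvents_le_pi le_rfl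
    simp_rw [Pi.add_apply, add_mul]
    rw [lintegral_add_left (show Measurable fun ω' => g₁ ω' * f ω' from hg₁'.mul hf), ih₁ ω, ih₂ ω]
  · intro gs hgs hmono ih ω
    have hgs' : ∀ n, Measurable (gs n) := fun n => (hgs n).mono cylinderEvents_le_pi le_rfl
    have h1 : ∀ ω', (⨆ n, gs n ω') * f ω' = ⨆ n, gs n ω' * f ω' := fun ω' =>
      ENNReal.iSup_mul _ _
    simp_rw [h1]
    rw [lintegral_iSup (f := fun n ω' => gs n ω' * f ω') (fun n => (hgs' n).mul hf)
      (fun n m hnm ω' => mul_le_mul_left (hmono hnm ω') _)]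
    simp_rw [ih]
    rw [← ENNReal.iSup_mul]

/-- Measurability of `ω ↦ ∫⁻ f ∂γ.ker Λ ω` w.r.t. `ℱ_{Λᶜ}`. -/
lemma ker_lintegral_measurable (Λ : Finset S) {f : (S → E) → ℝ≥0∞} (hf : Measurable f) :
    Measurable[MeasureTheory.cylinderEvents ((↑Λ : Set S)ᶜ)]
      (fun ω => ∫⁻ ω', f ω' ∂(γ.ker Λ ω)) := by
  refine Measurable.ennreal_induction (motive := fun f =>
    Measurable[MeasureTheory.cylinderEvents ((↑Λ : Set S)ᶜ)]
      (fun ω => ∫⁻ ω', f ω' ∂(γ.ker Λ ω))) ?_ ?_ ?_ hf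
  · intro c s hs
    simp_rw [lintegral_indicator_const hs]
    exact (γ.meas Λ s hs).const_mul c
  · intro f₁ f₂ _ hf₁ hf₂ ih₁ ih₂
    simp_rw [Pi.add_apply]
    have : ∀ ω, ∫⁻ ω', f₁ ω' + f₂ ω' ∂(γ.ker Λ ω)
        = (∫⁻ ω', f₁ ω' ∂(γ.ker Λ ω)) + ∫⁻ ω', f₂ ω' ∂(γ.ker Λ ω) := fun ω =>
      lintegral_add_left hf₁ _
    simp_rw [this]
    exact ih₁.add ih₂
  · intro fs hfs hmono ih
    have : ∀ ω, ∫⁻ ω', ⨆ n, fs n ω' ∂(γ.ker Λ ω) = ⨆ n, ∫⁻ ω', fs n ω' ∂(γ.ker Λ ω) := fun ω =>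
      lintegral_iSup hfs hmono
    simp_rw [this]
    exact Measurable.iSup ih

/-- Consistency for functions: integrating the kernel average against a Gibbs
measure gives the plain integral. -/
lemma gibbs_lintegral {μ : Measure (S → E)} (hμ : IsGibbsFor γ μ) (Λ : Finset S)
    {f : (S → E) → ℝ≥0∞} (hf : Measurable f) :
    ∫⁻ ω, (∫⁻ ω', f ω' ∂(γ.ker Λ ω)) ∂μ = ∫⁻ ω, f ω ∂μ := by
  refine Measurable.ennreal_induction (motive := fun f =>
    ∫⁻ ω, (∫⁻ ω', f ω' ∂(γ.ker Λ ω)) ∂μ = ∫⁻ ω, f ω ∂μ) ?_ ?_ ?_ hf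
  · intro c s hs
    simp_rw [lintegral_indicator_const hs]
    rw [lintegral_const_mul c ((γ.meas Λ s hs).mono cylinderEvents_le_pi le_rfl),
      hμ.2 Λ s hs]
  · intro f₁ f₂ _ hf₁ hf₂ ih₁ ih₂
    simp_rw [Pi.add_apply]
    have h1 : ∀ ω, ∫⁻ ω', f₁ ω' + f₂ ω' ∂(γ.ker Λ ω)
        = (∫⁻ ω', f₁ ω' ∂(γ.ker Λ ω)) + ∫⁻ ω', f₂ ω' ∂(γ.ker Λ ω) := fun ω =>
      lintegral_add_left hf₁ _
    simp_rw [h1]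
    rw [lintegral_add_left ((ker_lintegral_measurable γ Λ hf₁).mono cylinderEvents_le_pi le_rfl),
      lintegral_add_left hf₁, ih₁, ih₂]
  · intro fs hfs hmono ih
    have h1 : ∀ ω, ∫⁻ ω', ⨆ n, fs n ω' ∂(γ.ker Λ ω) = ⨆ n, ∫⁻ ω', fs n ω' ∂(γ.ker Λ ω) :=
      fun ω => lintegral_iSup hfs hmono
    simp_rw [h1]
    rw [lintegral_iSup
      (fun n => (ker_lintegral_measurable γ Λ (hfs n)).mono cylinderEvents_le_pi le_rfl)
      (fun n m hnm ω => lintegral_mono fun ω' => hmono hnm ω'),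
      lintegral_iSup hfs hmono]
    simp_rw [ih]

end Helpers

section Density
variable {E S : Type*} [MeasurableSpace E] (γ : Specification E S)

/-- For Gibbs measures `μ ≪ ρ`, the kernel average of the density is `ρ`-a.e.
equal to the density. -/
lemma rnDeriv_kernel_ae_eq {μ ρ : Measure (S → E)} (hμ : IsGibbsFor γ μ)
    (hρ : IsGibbsFor γ ρ) (hac : μ ≪ ρ) (Λ : Finset S) :
    (fun ω => ∫⁻ ω', μ.rnDeriv ρ ω' ∂(γ.ker Λ ω)) =ᵐ[ρ] μ.rnDeriv ρ := by
  haveI := hμ.1; haveI := hρ.1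
  set f := μ.rnDeriv ρ with hfdef
  have hf : Measurable f := Measure.measurable_rnDeriv μ ρ
  set fΛ : (S → E) → ℝ≥0∞ := fun ω => ∫⁻ ω', f ω' ∂(γ.ker Λ ω) with hfΛdef
  have hfΛcyl : Measurable[MeasureTheory.cylinderEvents ((↑Λ : Set S)ᶜ)] fΛ :=
    ker_lintegral_measurable γ Λ hf
  have hfΛ : Measurable fΛ := hfΛcyl.mono cylinderEvents_le_pi le_rfl
  have key : ρ.withDensity fΛ = μ := by
    refine Measure.ext fun A hA => ?_
    have hγA : Measurable (fun ω => γ.ker Λ ω A) :=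
      (γ.meas Λ A hA).mono cylinderEvents_le_pi le_rfl
    calc ρ.withDensity fΛ A = ∫⁻ ω in A, fΛ ω ∂ρ := withDensity_apply _ hA
      _ = ∫⁻ ω, A.indicator fΛ ω ∂ρ := (lintegral_indicator hA fΛ).symm
      _ = ∫⁻ ω, (∫⁻ ω', A.indicator fΛ ω' ∂(γ.ker Λ ω)) ∂ρ :=
          (gibbs_lintegral γ hρ Λ (hfΛ.indicator hA)).symm
      _ = ∫⁻ ω, fΛ ω * γ.ker Λ ω A ∂ρ := by
          refine lintegral_congr fun ω => ?_
          have h1 : ∀ ω', A.indicator fΛ ω' = fΛ ω' * A.indicator (fun _ => (1:ℝ≥0∞)) ω' := by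
            intro ω'; by_cases h : ω' ∈ A <;> simp [h]
          simp_rw [h1]
          rw [lintegral_mul_proper γ Λ (f := A.indicator (fun _ => (1:ℝ≥0∞))) hfΛcyl
              (measurable_const.indicator hA) ω,
            lintegral_indicator_const hA, one_mul]
      _ = ∫⁻ ω, (∫⁻ ω', γ.ker Λ ω' A * f ω' ∂(γ.ker Λ ω)) ∂ρ := by
          refine lintegral_congr fun ω => ?_
          rw [lintegral_mul_proper γ Λ (γ.meas Λ A hA) hf ω, mul_comm]
      _ = ∫⁻ ω, γ.ker Λ ω A * f ω ∂ρ := gibbs_lintegral γ hρ Λ (hγA.mul hf)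
      _ = ∫⁻ ω, (f * fun ω => γ.ker Λ ω A) ω ∂ρ := by
          refine lintegral_congr fun ω => ?_
          simp [mul_comm]
      _ = ∫⁻ ω, γ.ker Λ ω A ∂(ρ.withDensity f) :=
          (lintegral_withDensity_eq_lintegral_mul ρ hf hγA).symm
      _ = ∫⁻ ω, γ.ker Λ ω A ∂μ := by rw [Measure.withDensity_rnDeriv_eq μ ρ hac]
      _ = μ A := hμ.2 Λ A hA
  have h2 : fΛ =ᵐ[ρ] (ρ.withDensity fΛ).rnDeriv ρ := (Measure.rnDeriv_withDensity ρ hfΛ).symm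
  rwa [key] at h2

end Density

section TailDet
variable {E S : Type*} [MeasurableSpace E] [Countable S]

lemma tail_determined (γ : Specification E S) (μ ν : Measure (S → E))
    (hμ : IsGibbsFor γ μ) (hν : IsGibbsFor γ ν)
    (h : ∀ B : Set (S → E), MeasurableSet[tailSigma E S] B → μ B = ν B) : μ = ν := by
  haveI := hμ.1; haveI := hν.1
  haveI : Encodable S := Encodable.ofCountable S
  -- an exhausting sequence of finite sets
  set Λseq : ℕ → Finset S := fun n =>
    (Finset.range n).preimage Encodable.encode Encodable.encode_injective.injOn with hΛseq
  have hcof : ∀ Λ : Finset S, ∃ N, ∀ n, Λ ⊆ Λseq (n + N) := by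
    intro Λ
    refine ⟨(Λ.sup Encodable.encode) + 1, fun n s hs => ?_⟩
    rw [hΛseq]
    simp only [Finset.mem_preimage, Finset.mem_range]
    have := Finset.le_sup (f := Encodable.encode) hs
    omega
  -- the mixture ρ
  set ρ : Measure (S → E) := (2:ℝ≥0∞)⁻¹ • μ + (2:ℝ≥0∞)⁻¹ • ν with hρdef
  haveI hρprob : IsProbabilityMeasure ρ := by
    constructor
    rw [hρdef]
    simp only [Measure.add_apply, Measure.smul_apply, smul_eq_mul, measure_univ, mul_one]
    exact ENNReal.inv_two_add_inv_two
  have hρgibbs : IsGibbsFor γ ρ := by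
    refine ⟨hρprob, fun Λ A hA => ?_⟩
    rw [hρdef]
    simp only [lintegral_add_measure, lintegral_smul_measure, Measure.add_apply,
      Measure.smul_apply, smul_eq_mul]
    rw [hμ.2 Λ A hA, hν.2 Λ A hA]
  have hhalf : ((2:ℝ≥0∞)⁻¹ : ℝ≥0∞) ≠ 0 := by simp
  have hμρ : μ ≪ ρ := by
    intro s hs
    rw [hρdef] at hs
    simp only [Measure.add_apply, Measure.smul_apply, smul_eq_mul, add_eq_zero,
      mul_eq_zero] at hs
    rcases hs.1 with h' | h'
    · exact absurd h' hhalf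
    · exact h'
  have hνρ : ν ≪ ρ := by
    intro s hs
    rw [hρdef] at hs
    simp only [Measure.add_apply, Measure.smul_apply, smul_eq_mul, add_eq_zero,
      mul_eq_zero] at hs
    rcases hs.2 with h' | h'
    · exact absurd h' hhalf
    · exact h'
  set f := μ.rnDeriv ρ with hfdef
  set f' := ν.rnDeriv ρ with hf'def
  have hf : Measurable f := Measure.measurable_rnDeriv μ ρ
  have hf' : Measurable f' := Measure.measurable_rnDeriv ν ρ
  -- the tail-measurable versions
  set g : (S → E) → ℝ≥0∞ :=
    fun ω => Filter.limsup (fun n => ∫⁻ ω', f ω' ∂(γ.ker (Λseq n) ω)) Filter.atTop with hgdef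
  set g' : (S → E) → ℝ≥0∞ :=
    fun ω => Filter.limsup (fun n => ∫⁻ ω', f' ω' ∂(γ.ker (Λseq n) ω)) Filter.atTop with hg'def
  have hcylmeas : ∀ (k : (S → E) → ℝ≥0∞), Measurable k → ∀ Λ : Finset S,
      Measurable[MeasureTheory.cylinderEvents ((↑Λ : Set S)ᶜ)]
        (fun ω => Filter.limsup (fun n => ∫⁻ ω', k ω' ∂(γ.ker (Λseq n) ω)) Filter.atTop) := by
    intro k hk Λ
    obtain ⟨N, hN⟩ := hcof Λ
    have hrw : (fun ω => Filter.limsup (fun n => ∫⁻ ω', k ω' ∂(γ.ker (Λseq n) ω)) Filter.atTop)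
        = fun ω => Filter.limsup (fun n => ∫⁻ ω', k ω' ∂(γ.ker (Λseq (n + N)) ω))
            Filter.atTop := by
      funext ω
      exact (Filter.limsup_nat_add _ N).symm
    rw [hrw]
    refine Measurable.limsup fun n => ?_
    exact (ker_lintegral_measurable γ (Λseq (n + N)) hk).mono
      (cylinderEvents_mono (Set.compl_subset_compl.mpr (Finset.coe_subset.mpr (hN n)))) le_rfl
  have hgtail : Measurable[tailSigma E S] g := by
    intro s hs
    rw [tailSigma, MeasurableSpace.measurableSet_iInf]
    exact fun Λ => hcylmeas f hf Λ hs
  have hg'tail : Measurable[tailSigma E S] g' := by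
    intro s hs
    rw [tailSigma, MeasurableSpace.measurableSet_iInf]
    exact fun Λ => hcylmeas f' hf' Λ hs
  -- a.e. equality with the densities
  have hgae : g =ᵐ[ρ] f := by
    have hall : ∀ᵐ ω ∂ρ, ∀ n, (∫⁻ ω', f ω' ∂(γ.ker (Λseq n) ω)) = f ω :=
      ae_all_iff.mpr fun n => rnDeriv_kernel_ae_eq γ hμ hρgibbs hμρ (Λseq n)
    filter_upwards [hall] with ω hω
    show Filter.limsup _ Filter.atTop = f ω
    simp only [hω]
    exact Filter.limsup_const _
  have hg'ae : g' =ᵐ[ρ] f' := by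
    have hall : ∀ᵐ ω ∂ρ, ∀ n, (∫⁻ ω', f' ω' ∂(γ.ker (Λseq n) ω)) = f' ω :=
      ae_all_iff.mpr fun n => rnDeriv_kernel_ae_eq γ hν hρgibbs hνρ (Λseq n)
    filter_upwards [hall] with ω hω
    show Filter.limsup _ Filter.atTop = f' ω
    simp only [hω]
    exact Filter.limsup_const _
  -- equal set-integrals over tail events
  have hagree : ∀ B : Set (S → E), MeasurableSet[tailSigma E S] B →
      ∫⁻ ω in B, g ω ∂ρ = ∫⁻ ω in B, g' ω ∂ρ := by
    intro B hB
    have hBpi : MeasurableSet B := tail_le_pi B hB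
    calc ∫⁻ ω in B, g ω ∂ρ = ∫⁻ ω in B, f ω ∂ρ :=
          lintegral_congr_ae (ae_restrict_of_ae hgae)
      _ = μ B := by rw [← withDensity_apply f hBpi, Measure.withDensity_rnDeriv_eq μ ρ hμρ]
      _ = ν B := h B hB
      _ = ∫⁻ ω in B, f' ω ∂ρ := by
          rw [← withDensity_apply f' hBpi, Measure.withDensity_rnDeriv_eq ν ρ hνρ]
      _ = ∫⁻ ω in B, g' ω ∂ρ := (lintegral_congr_ae (ae_restrict_of_ae hg'ae)).symm
  -- conclude via the trimmed measure
  have hm : tailSigma E S ≤ (MeasurableSpace.pi : MeasurableSpace (S → E)) := tail_le_pi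
  have hconv : ∀ (k : (S → E) → ℝ≥0∞), Measurable[tailSigma E S] k →
      ∀ s : Set (S → E), MeasurableSet[tailSigma E S] s →
      ∫⁻ ω in s, k ω ∂(ρ.trim hm) = ∫⁻ ω in s, k ω ∂ρ := by
    intro k hk s hs
    rw [← lintegral_indicator (μ := ρ.trim hm) hs k, ← lintegral_indicator (μ := ρ) (hm s hs) k,
      lintegral_trim hm (hk.indicator hs)]
  have htrim : g =ᵐ[ρ.trim hm] g' := by
    refine ae_eq_of_forall_setLIntegral_eq_of_sigmaFinite (μ := ρ.trim hm) hgtail hg'tail ?_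
    intro s hs _
    rw [hconv g hgtail s hs, hconv g' hg'tail s hs]
    exact hagree s hs
  have hgg' : g =ᵐ[ρ] g' := ae_eq_of_ae_eq_trim htrim
  have hff' : f =ᵐ[ρ] f' := (hgae.symm.trans hgg').trans hg'ae
  calc μ = ρ.withDensity f := (Measure.withDensity_rnDeriv_eq μ ρ hμρ).symm
    _ = ρ.withDensity f' := withDensity_congr_ae hff'
    _ = ν := Measure.withDensity_rnDeriv_eq ν ρ hνρ

end TailDet

section Trivial
variable {E S : Type*} [MeasurableSpace E]

/-- Conditioning a Gibbs measure on a tail event of positive measure yields a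
Gibbs measure. -/
lemma gibbs_cond (γ : Specification E S) {μ : Measure (S → E)} (hμ : IsGibbsFor γ μ)
    {C : Set (S → E)} (hCpi : MeasurableSet C)
    (hCcyl : ∀ Λ : Finset S, MeasurableSet[MeasureTheory.cylinderEvents ((↑Λ : Set S)ᶜ)] C)
    (hC0 : μ C ≠ 0) : IsGibbsFor γ ((μ C)⁻¹ • μ.restrict C) := by
  haveI := hμ.1
  constructor
  · constructor
    show ((μ C)⁻¹ • μ.restrict C) Set.univ = 1
    rw [Measure.smul_apply, Measure.restrict_apply_univ, smul_eq_mul,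
      ENNReal.inv_mul_cancel hC0 (measure_ne_top μ C)]
  · intro Λ A hA
    rw [lintegral_smul_measure, Measure.smul_apply, smul_eq_mul]
    congr 1
    have hptw : ∀ ω, C.indicator (fun ω => γ.ker Λ ω A) ω = γ.ker Λ ω (A ∩ C) := by
      intro ω
      have h1 : ∫⁻ ω' in C, A.indicator (fun _ => (1:ℝ≥0∞)) ω' ∂(γ.ker Λ ω)
          = γ.ker Λ ω (A ∩ C) := by
        rw [lintegral_indicator_const hA, one_mul, Measure.restrict_apply hA]
      rw [← h1, setLIntegral_proper γ Λ ω (hCcyl Λ)]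
      by_cases hω : ω ∈ C <;> simp [hω, lintegral_indicator_const hA]
    calc ∫⁻ ω, γ.ker Λ ω A ∂(μ.restrict C)
        = ∫⁻ ω, C.indicator (fun ω => γ.ker Λ ω A) ω ∂μ := (lintegral_indicator hCpi _).symm
      _ = ∫⁻ ω, γ.ker Λ ω (A ∩ C) ∂μ := lintegral_congr hptw
      _ = μ (A ∩ C) := hμ.2 Λ (A ∩ C) (hA.inter hCpi)
      _ = μ.restrict C A := (Measure.restrict_apply hA).symm

/-- Extreme Gibbs measures are trivial on the tail σ-algebra. -/
lemma extreme_tail_trivial (γ : Specification E S) {μ : Measure (S → E)}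
    (hμ : IsExtremeGibbs γ μ) {B : Set (S → E)}
    (hB : MeasurableSet[tailSigma E S] B) : μ B = 0 ∨ μ B = 1 := by
  haveI := hμ.1.1
  by_contra hcon
  push_neg at hcon
  obtain ⟨hB0, hB1⟩ := hcon
  have hBpi : MeasurableSet B := tail_le_pi B hB
  have hBcyl : ∀ Λ : Finset S, MeasurableSet[MeasureTheory.cylinderEvents ((↑Λ : Set S)ᶜ)] B :=
    fun Λ => tail_le_cyl Λ B hB
  have hBne : μ B ≠ ∞ := measure_ne_top μ B
  have hBc : μ Bᶜ = 1 - μ B := prob_compl_eq_one_sub hBpi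
  have hBc0 : μ Bᶜ ≠ 0 := by
    rw [hBc]
    intro hcontra
    rw [tsub_eq_zero_iff_le] at hcontra
    exact hB1 (le_antisymm prob_le_one hcontra)
  have hBcne : μ Bᶜ ≠ ∞ := measure_ne_top μ Bᶜ
  set ν : Measure (S → E) := (μ B)⁻¹ • μ.restrict B with hνdef
  set ν' : Measure (S → E) := (μ Bᶜ)⁻¹ • μ.restrict Bᶜ with hν'def
  have hν : IsGibbsFor γ ν := gibbs_cond γ hμ.1 hBpi hBcyl hB0
  have hν' : IsGibbsFor γ ν' :=
    gibbs_cond γ hμ.1 hBpi.compl (fun Λ => (hBcyl Λ).compl) hBc0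
  have hdecomp : μ = (μ B) • ν + (1 - μ B) • ν' := by
    rw [← hBc, hνdef, hν'def, smul_smul, smul_smul,
      ENNReal.mul_inv_cancel hB0 hBne, ENNReal.mul_inv_cancel hBc0 hBcne, one_smul, one_smul,
      Measure.restrict_add_restrict_compl hBpi]
  obtain ⟨hνμ, -⟩ := hμ.2 ν ν' (μ B) hν hν' (pos_iff_ne_zero.mpr hB0)
    (lt_of_le_of_ne prob_le_one hB1) hdecomp
  have hν1 : ν B = 1 := by
    rw [hνdef]
    show ((μ B)⁻¹ • μ.restrict B) B = 1
    rw [Measure.smul_apply, Measure.restrict_apply hBpi, Set.inter_self, smul_eq_mul,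
      ENNReal.inv_mul_cancel hB0 hBne]
  rw [hνμ] at hν1
  exact hB1 hν1

end Trivial


/-- Distinct extreme points of `𝒢(γ)` are mutually singular: they are
separated by a tail event; more generally, every `μ ∈ 𝒢(γ)` is uniquely
determined within `𝒢(γ)` by its restriction to the tail σ-algebra. -/
theorem extreme_mutually_singular_and_tail_determined
    {E S : Type*} [Fintype E] [MeasurableSpace E] [Countable S]
    (γ : Specification E S) :
    (∀ μ ν : MeasureTheory.Measure (S → E), IsExtremeGibbs γ μ →
      IsExtremeGibbs γ ν → μ ≠ ν →
        ∃ B : Set (S → E), MeasurableSet[tailSigma E S] B ∧ μ B = 1 ∧ ν B = 0) ∧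
    (∀ μ ν : MeasureTheory.Measure (S → E), IsGibbsFor γ μ → IsGibbsFor γ ν →
      (∀ B : Set (S → E), MeasurableSet[tailSigma E S] B → μ B = ν B) → μ = ν) := by
  refine ⟨?_, fun μ ν hμ hν h => tail_determined γ μ ν hμ hν h⟩
  intro μ ν hμ hν hne
  haveI := hμ.1.1
  haveI := hν.1.1
  have hex : ∃ B : Set (S → E), MeasurableSet[tailSigma E S] B ∧ μ B ≠ ν B := by
    by_contra hcon
    push_neg at hcon
    exact hne (tail_determined γ μ ν hμ.1 hν.1 fun B hB => hcon B hB)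
  obtain ⟨B, hB, hBne⟩ := hex
  have hBpi : MeasurableSet B := tail_le_pi B hB
  rcases extreme_tail_trivial γ hμ hB with h0 | h1 <;>
    rcases extreme_tail_trivial γ hν hB with k0 | k1
  · exact absurd (h0.trans k0.symm) hBne
  · refine ⟨Bᶜ, hB.compl, ?_, ?_⟩
    · rw [prob_compl_eq_one_sub hBpi, h0]; simp
    · rw [prob_compl_eq_one_sub hBpi, k1]; simp
  · exact ⟨B, hB, h1, k0⟩
  · exact absurd (h1.trans k1.symm) hBne
end

section
/- Let γ be a non-null quasilocal specification on Ω = E^S with E finite, fix a reference configuration '+', and define the vacuum potential Φ⁺_A(σ) = -Σ_{B⊆A} (-1)^{|A∖B|} log(γ_B(σ|+)/γ_B(+|+)) for finite A. Then Φ⁺ satisfies the vacuum condition: Φ⁺_A(σ) = 0 whenever σ_i = +_i for some i ∈ A. -/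
/-- The concatenated configuration `σ_Λ ω_{Λᶜ}`. -/
noncomputable def extendIn {E S : Type*} [DecidableEq S] (Λ : Finset S)
    (σ : ↥Λ → E) (ω : S → E) : S → E :=
  fun i => if h : i ∈ Λ then σ ⟨i, h⟩ else ω i

/-- The vacuum potential with vacuum state `+` associated to a specification
with single-configuration weights `γ_B(σ|ω)` (the probability of the
configuration `σ_B ω_{Bᶜ}` under `γ_B(·|ω)`):
`Φ⁺_A(σ) = -Σ_{B ⊆ A} (-1)^{|A∖B|} log (γ_B(σ|+) / γ_B(+|+))`. -/
noncomputable def vacuumPot {E S : Type*} [DecidableEq S]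
    (γ : Finset S → (S → E) → (S → E) → ℝ) (plus : S → E)
    (A : Finset S) (σ : S → E) : ℝ :=
  -∑ B ∈ A.powerset,
    (-1 : ℝ) ^ ((A \ B).card) * Real.log (γ B σ plus / γ B plus plus)

/-- For a non-null quasilocal specification `γ` (described here by its
single-configuration weights, with positivity, properness/locality,
normalization, consistency of the densities `f_B(ω) = γ_B(ω|ω)`, and
quasilocality), the vacuum potential `Φ⁺` with vacuum state `+` satisfies
the vacuum condition: `Φ⁺_A(σ) = 0` whenever `σ_i = +_i` for some `i ∈ A`. -/
theorem vacuum_potential_vacuum_condition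
    {E S : Type*} [Fintype E] [Nonempty E] [TopologicalSpace E]
    [DiscreteTopology E] [DecidableEq S] [Countable S]
    (γ : Finset S → (S → E) → (S → E) → ℝ) (plus : S → E)
    (hpos : ∀ (B : Finset S) (σ ω : S → E), 0 < γ B σ ω)
    (hdepσ : ∀ (B : Finset S) (σ σ2 ω : S → E), (∀ i ∈ B, σ i = σ2 i) →
      γ B σ ω = γ B σ2 ω)
    (hdepω : ∀ (B : Finset S) (σ ω ω2 : S → E), (∀ i ∉ B, ω i = ω2 i) →
      γ B σ ω = γ B σ ω2)
    (hnorm : ∀ (B : Finset S) (ω : S → E),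
      ∑ σ : ↥B → E, γ B (extendIn B σ ω) ω = 1)
    (hcons : ∀ (B B2 : Finset S), B ⊆ B2 → ∀ ω ω2 : S → E,
      (∀ i ∉ B, ω i = ω2 i) →
        γ B2 ω2 ω2 * γ B ω ω = γ B ω2 ω2 * γ B2 ω ω)
    (hql : ∀ (B : Finset S) (σ : S → E), Continuous (fun ω : S → E => γ B σ ω)) :
    ∀ (A : Finset S) (σ : S → E), (∃ i ∈ A, σ i = plus i) →
      vacuumPot γ plus A σ = 0 := by
  rintro A σ ⟨i, hiA, hσi⟩
  -- key ratio identity: for i ∉ B with σ i = plus i,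
  -- γ (insert i B) σ plus / γ (insert i B) plus plus = γ B σ plus / γ B plus plus
  have key : ∀ B : Finset S, i ∉ B →
      γ (insert i B) σ plus / γ (insert i B) plus plus
        = γ B σ plus / γ B plus plus := by
    intro B hiB
    set σ' : S → E := fun j => if j ∈ B then σ j else plus j with hσ'
    have hσ'B : ∀ j ∈ B, σ j = σ' j := by intro j hj; simp [hσ', hj]
    have hσ'off : ∀ j ∉ B, plus j = σ' j := by intro j hj; simp [hσ', hj]
    have h1 : γ B σ plus = γ B σ' σ' := by
      rw [hdepσ B σ σ' plus hσ'B, hdepω B σ' plus σ' hσ'off]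
    have h2 : γ (insert i B) σ plus = γ (insert i B) σ' σ' := by
      have hσ'B2 : ∀ j ∈ insert i B, σ j = σ' j := by
        intro j hj
        rcases Finset.mem_insert.mp hj with h | h
        · subst h; simp [hσ', hiB, hσi]
        · exact hσ'B j h
      have hσ'off2 : ∀ j ∉ insert i B, plus j = σ' j := fun j hj =>
        hσ'off j (fun h => hj (Finset.mem_insert_of_mem h))
      rw [hdepσ _ σ σ' plus hσ'B2, hdepω _ σ' plus σ' hσ'off2]
    have hc := hcons B (insert i B) (Finset.subset_insert i B) plus σ' hσ'off
    rw [h1, h2]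
    have p1 := (hpos B plus plus).ne'
    have p2 := (hpos (insert i B) plus plus).ne'
    field_simp
    linarith [hc]
  -- now the alternating sum cancels
  set A' := A.erase i with hA'
  have hiA' : i ∉ A' := Finset.notMem_erase i A
  have hins : A = insert i A' := (Finset.insert_erase hiA).symm
  unfold vacuumPot
  rw [hins, Finset.sum_powerset_insert hiA', neg_eq_zero]
  rw [← Finset.sum_add_distrib]
  apply Finset.sum_eq_zero
  intro B hB
  have hBA' : B ⊆ A' := Finset.mem_powerset.mp hB
  have hiB : i ∉ B := fun h => hiA' (hBA' h)
  have hcard1 : (insert i A' \ B).card = (A' \ B).card + 1 := by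
    have : insert i A' \ B = insert i (A' \ B) := by
      ext j; simp only [Finset.mem_sdiff, Finset.mem_insert]
      constructor
      · rintro ⟨h | h, hnb⟩
        · exact Or.inl h
        · exact Or.inr ⟨h, hnb⟩
      · rintro (h | ⟨h, hnb⟩)
        · subst h; exact ⟨Or.inl rfl, hiB⟩
        · exact ⟨Or.inr h, hnb⟩
    rw [this, Finset.card_insert_of_notMem (by simp [hiA'])]
  have hcard2 : (insert i A' \ insert i B).card = (A' \ B).card := by
    congr 1
    ext j; simp only [Finset.mem_sdiff, Finset.mem_insert]
    constructor
    · rintro ⟨h | h, hnb⟩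
      · exact absurd (Or.inl h) hnb
      · exact ⟨h, fun hb => hnb (Or.inr hb)⟩
    · rintro ⟨h, hnb⟩
      refine ⟨Or.inr h, ?_⟩
      rintro (rfl | hb)
      · exact hiA' h
      · exact hnb hb
  rw [hcard1, hcard2, key B hiB, pow_succ]
  ring
end

section
/- For a non-null quasilocal specification γ on Ω = E^S (E finite) with vacuum potential Φ⁺ (vacuum state +), the Moebius-inverted free-boundary Hamiltonian satisfies H_B^{Φ⁺,f}(σ) := Σ_{A⊆B} Φ⁺_A(σ) = -log(γ_B(σ|+)/γ_B(+|+)) for every finite B, and moreover for any site i ∈ B, H_B^{Φ⁺,f}(σ_{B∖i} +_i ·) = H_{B∖i}^{Φ⁺,f} evaluated at the corresponding configuration (the Hamiltonian is insensitive to sites where σ agrees with +). -/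
/-- Moebius inversion over the subset lattice. -/
lemma mobius_powerset {S : Type*} [DecidableEq S] (B : Finset S) :
    ∀ f : Finset S → ℝ,
      ∑ A ∈ B.powerset, ∑ C ∈ A.powerset, (-1 : ℝ) ^ ((A \ C).card) * f C = f B := by
  induction B using Finset.induction_on with
  | empty => intro f; simp
  | insert _ _ ha ih =>
    rename_i a s
    intro f
    rw [Finset.sum_powerset_insert ha, ih f]
    have key : ∀ A ∈ s.powerset,
        (∑ C ∈ (insert a A).powerset, (-1 : ℝ) ^ (((insert a A) \ C).card) * f C)
        = (∑ C ∈ A.powerset, (-1 : ℝ) ^ ((A \ C).card) * (-(f C) + f (insert a C))) := by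
      intro A hA
      rw [Finset.mem_powerset] at hA
      have haA : a ∉ A := fun h => ha (hA h)
      rw [Finset.sum_powerset_insert haA, ← Finset.sum_add_distrib]
      refine Finset.sum_congr rfl fun C hC => ?_
      rw [Finset.mem_powerset] at hC
      have haC : a ∉ C := fun h => ha (hA (hC h))
      have h1 : (insert a A) \ C = insert a (A \ C) := by
        ext j; simp only [Finset.mem_sdiff, Finset.mem_insert]
        constructor
        · rintro ⟨(rfl | hj), hjc⟩
          · exact Or.inl rfl
          · exact Or.inr ⟨hj, hjc⟩
        · rintro (rfl | ⟨hj, hjc⟩)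
          · exact ⟨Or.inl rfl, haC⟩
          · exact ⟨Or.inr hj, hjc⟩
      have h2 : (insert a A) \ (insert a C) = A \ C := by
        ext j; simp only [Finset.mem_sdiff, Finset.mem_insert, not_or]
        constructor
        · rintro ⟨(rfl | hj), hja, hjc⟩
          · exact absurd rfl hja
          · exact ⟨hj, hjc⟩
        · rintro ⟨hj, hjc⟩
          exact ⟨Or.inr hj, fun h => haA (h ▸ hj), hjc⟩
      have hcard : (insert a (A \ C)).card = (A \ C).card + 1 :=
        Finset.card_insert_of_notMem (by simp [haA])
      rw [h1, h2, hcard]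
      ring
    rw [Finset.sum_congr rfl key, ih (fun C => -(f C) + f (insert a C))]
    ring

/-- For a non-null quasilocal specification `γ` with vacuum potential `Φ⁺`
(vacuum state `+`), the Moebius-inverted free-boundary Hamiltonian satisfies
`H_B^{Φ⁺,f}(σ) = Σ_{A ⊆ B} Φ⁺_A(σ) = -log (γ_B(σ|+)/γ_B(+|+))` for every
finite `B`, and the Hamiltonian is insensitive to sites where `σ` agrees
with `+`: if `i ∈ B` and `σ_i = +_i` then
`H_B^{Φ⁺,f}(σ) = H_{B∖i}^{Φ⁺,f}(σ)`. -/
theorem vacuum_hamiltonian_free_boundary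
    {E S : Type*} [Fintype E] [Nonempty E] [TopologicalSpace E]
    [DiscreteTopology E] [DecidableEq S] [Countable S]
    (γ : Finset S → (S → E) → (S → E) → ℝ) (plus : S → E)
    (hpos : ∀ (B : Finset S) (σ ω : S → E), 0 < γ B σ ω)
    (hdepσ : ∀ (B : Finset S) (σ σ2 ω : S → E), (∀ i ∈ B, σ i = σ2 i) →
      γ B σ ω = γ B σ2 ω)
    (hdepω : ∀ (B : Finset S) (σ ω ω2 : S → E), (∀ i ∉ B, ω i = ω2 i) →
      γ B σ ω = γ B σ ω2)
    (hnorm : ∀ (B : Finset S) (ω : S → E),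
      ∑ σ : ↥B → E, γ B (extendIn B σ ω) ω = 1)
    (hcons : ∀ (B B2 : Finset S), B ⊆ B2 → ∀ ω ω2 : S → E,
      (∀ i ∉ B, ω i = ω2 i) →
        γ B2 ω2 ω2 * γ B ω ω = γ B ω2 ω2 * γ B2 ω ω)
    (hql : ∀ (B : Finset S) (σ : S → E), Continuous (fun ω : S → E => γ B σ ω)) :
    (∀ (B : Finset S) (σ : S → E),
      ∑ A ∈ B.powerset, vacuumPot γ plus A σ
        = -Real.log (γ B σ plus / γ B plus plus)) ∧
    (∀ (B : Finset S), ∀ i ∈ B, ∀ σ : S → E, σ i = plus i →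
      ∑ A ∈ B.powerset, vacuumPot γ plus A σ
        = ∑ A ∈ (B.erase i).powerset, vacuumPot γ plus A σ) := by
  -- Part 1: Moebius inversion
  have part1 : ∀ (B : Finset S) (σ : S → E),
      ∑ A ∈ B.powerset, vacuumPot γ plus A σ
        = -Real.log (γ B σ plus / γ B plus plus) := by
    intro B σ
    have := mobius_powerset B (fun C => Real.log (γ C σ plus / γ C plus plus))
    simp only [vacuumPot]
    rw [Finset.sum_neg_distrib, this]
  refine ⟨part1, ?_⟩
  -- Key: insensitivity of the log-ratio to adding a site where σ = plus.
  have glem : ∀ (C : Finset S) (i : S), i ∉ C → ∀ σ : S → E, σ i = plus i →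
      γ (insert i C) σ plus / γ (insert i C) plus plus
        = γ C σ plus / γ C plus plus := by
    intro C i hiC σ hσi
    set C2 := insert i C with hC2
    set ω' : S → E := fun j => if j ∈ C then σ j else plus j with hω'
    have hoffC : ∀ j ∉ C, plus j = ω' j := by
      intro j hj; simp [hω', hj]
    have hoffC2 : ∀ j ∉ C2, plus j = ω' j := by
      intro j hj
      exact hoffC j (fun h => hj (Finset.mem_insert_of_mem h))
    have honC : ∀ j ∈ C, σ j = ω' j := by
      intro j hj; simp [hω', hj]
    have honC2 : ∀ j ∈ C2, σ j = ω' j := by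
      intro j hj
      rcases Finset.mem_insert.mp hj with rfl | hj
      · simp [hω', hiC, hσi]
      · exact honC j hj
    have e1 : γ C σ plus = γ C ω' ω' := by
      rw [hdepσ C σ ω' plus honC, hdepω C ω' plus ω' hoffC]
    have e2 : γ C2 σ plus = γ C2 ω' ω' := by
      rw [hdepσ C2 σ ω' plus honC2, hdepω C2 ω' plus ω' hoffC2]
    have hcc := hcons C C2 (Finset.subset_insert i C) plus ω' hoffC
    -- hcc : γ C2 ω' ω' * γ C plus plus = γ C ω' ω' * γ C2 plus plus
    rw [e1, e2]
    have p1 := (hpos C plus plus).ne'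
    have p2 := (hpos C2 plus plus).ne'
    field_simp
    linarith [hcc]
  -- vacuumPot vanishes on sets containing a site where σ = plus
  have pot0 : ∀ (A : Finset S) (i : S), i ∉ A → ∀ σ : S → E, σ i = plus i →
      vacuumPot γ plus (insert i A) σ = 0 := by
    intro A i hiA σ hσi
    unfold vacuumPot
    rw [Finset.sum_powerset_insert hiA]
    have key : ∀ C ∈ A.powerset,
        ((-1:ℝ) ^ (((insert i A) \ C).card) * Real.log (γ C σ plus / γ C plus plus)
          + (-1:ℝ) ^ (((insert i A) \ (insert i C)).card)
              * Real.log (γ (insert i C) σ plus / γ (insert i C) plus plus)) = 0 := by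
      intro C hC
      rw [Finset.mem_powerset] at hC
      have hiC : i ∉ C := fun h => hiA (hC h)
      have h1 : (insert i A) \ C = insert i (A \ C) := by
        ext j; simp only [Finset.mem_sdiff, Finset.mem_insert]
        constructor
        · rintro ⟨(rfl | hj), hjc⟩
          · exact Or.inl rfl
          · exact Or.inr ⟨hj, hjc⟩
        · rintro (rfl | ⟨hj, hjc⟩)
          · exact ⟨Or.inl rfl, hiC⟩
          · exact ⟨Or.inr hj, hjc⟩
      have h2 : (insert i A) \ (insert i C) = A \ C := by
        ext j; simp only [Finset.mem_sdiff, Finset.mem_insert, not_or]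
        constructor
        · rintro ⟨(rfl | hj), hji, hjc⟩
          · exact absurd rfl hji
          · exact ⟨hj, hjc⟩
        · rintro ⟨hj, hjc⟩
          exact ⟨Or.inr hj, fun h => hiA (h ▸ hj), hjc⟩
      have hcard : (insert i (A \ C)).card = (A \ C).card + 1 :=
        Finset.card_insert_of_notMem (by simp [hiA])
      rw [h1, h2, hcard, glem C i hiC σ hσi]
      ring
    rw [← Finset.sum_add_distrib] at *
    rw [Finset.sum_congr rfl key]
    simp
  -- Part 2
  intro B i hiB σ hσi
  have hB : B = insert i (B.erase i) := (Finset.insert_erase hiB).symm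
  rw [hB, Finset.sum_powerset_insert (Finset.notMem_erase i B)]
  have : ∀ A ∈ (B.erase i).powerset, vacuumPot γ plus (insert i A) σ = 0 := by
    intro A hA
    rw [Finset.mem_powerset] at hA
    exact pot0 A i (fun h => Finset.notMem_erase i B (hA h)) σ hσi
  rw [Finset.sum_congr rfl this]
  simp
end
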